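/- Let m be a natural number, θ₀, …, θ_m real coefficients, and ν(u) = Σ_{ξ=0}^{m} (θ_ξ · sin(2πu))^(2ξ+1). Let μ be the uniform probability measure on the interval [0,1]. Then the distribution of the noise ν under μ is symmetric around zero: the pushforward of μ under u ↦ ν(u) equals the pushforward of μ under u ↦ −ν(u). -/

import Mathlib

open Real MeasureTheory

lemma mp_one_sub :
    MeasurePreserving (fun u : ℝ => 1 - u)
      (MeasureTheory.volume.restrict (Set.Icc (0:ℝ) 1))
      (MeasureTheory.volume.restrict (Set.Icc (0:ℝ) 1)) := by
  have h : MeasurePreserving (fun u : ℝ => 1 - u) volume volume := by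
    have := (measurePreserving_add_left (volume : Measure ℝ) 1).comp
      (Measure.measurePreserving_neg (volume : Measure ℝ))
    simpa [Function.comp_def, sub_eq_add_neg] using this
  have hpre : (fun u : ℝ => 1 - u) ⁻¹' Set.Icc (0:ℝ) 1 = Set.Icc (0:ℝ) 1 := by
    ext x
    simp only [Set.mem_preimage, Set.mem_Icc]
    constructor <;> intro h <;> exact ⟨by linarith [h.1, h.2], by linarith [h.1, h.2]⟩
  simpa [hpre] using h.restrict_preimage (s := Set.Icc (0:ℝ) 1)

/-- The sine polyonym noise `ν(u) = Σ_{ξ=0}^{m} (θ_ξ · sin(2πu))^(2ξ+1)`, with `u`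
uniform on `[0,1]`, is symmetrically distributed around zero: the law of `ν` equals
the law of `−ν`. -/
theorem sine_polyonym_noise_symmetric (m : ℕ) (θ : ℕ → ℝ) :
    MeasureTheory.Measure.map
        (fun u : ℝ =>
          ∑ ξ ∈ Finset.range (m + 1), (θ ξ * Real.sin (2 * Real.pi * u)) ^ (2 * ξ + 1))
        (MeasureTheory.volume.restrict (Set.Icc (0:ℝ) 1))
      = MeasureTheory.Measure.map
          (fun u : ℝ =>
            -∑ ξ ∈ Finset.range (m + 1), (θ ξ * Real.sin (2 * Real.pi * u)) ^ (2 * ξ + 1))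
          (MeasureTheory.volume.restrict (Set.Icc (0:ℝ) 1)) := by
  set ν : ℝ → ℝ := fun u =>
    ∑ ξ ∈ Finset.range (m + 1), (θ ξ * Real.sin (2 * Real.pi * u)) ^ (2 * ξ + 1) with hν
  have hmeas : Measurable ν := by
    apply Finset.measurable_sum
    intro ξ _
    exact ((measurable_const.mul ((Real.measurable_sin).comp
      (measurable_const.mul measurable_id))).pow_const _)
  have hkey : ∀ u : ℝ, ν (1 - u) = -ν u := by
    intro u
    simp only [hν, ← Finset.sum_neg_distrib]
    apply Finset.sum_congr rfl
    intro ξ _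
    have hs : Real.sin (2 * Real.pi * (1 - u)) = -Real.sin (2 * Real.pi * u) := by
      have : 2 * Real.pi * (1 - u) = 2 * Real.pi - 2 * Real.pi * u := by ring
      rw [this, Real.sin_sub, Real.sin_two_pi, Real.cos_two_pi]
      ring
    rw [hs, mul_neg, Odd.neg_pow ⟨ξ, by ring⟩]
  calc Measure.map ν (volume.restrict (Set.Icc (0:ℝ) 1))
      = Measure.map ν (Measure.map (fun u : ℝ => 1 - u)
          (volume.restrict (Set.Icc (0:ℝ) 1))) := by rw [mp_one_sub.map_eq]
    _ = Measure.map (ν ∘ fun u : ℝ => 1 - u) (volume.restrict (Set.Icc (0:ℝ) 1)) := by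
        exact Measure.map_map hmeas (show Measurable (fun u : ℝ => 1 - u) from
          measurable_id.const_sub 1)
    _ = Measure.map (fun u => -ν u) (volume.restrict (Set.Icc (0:ℝ) 1)) := by
        congr 1; funext u; exact hkey u
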